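/- The projective stabilizer of the vector u₋₁ = (0,1,0) in SO₀(2,1) is A ∪ k_π A: a matrix M ∈ SO₀(2,1) satisfies M·(0,1,0) = λ·(0,1,0) for some λ ≠ 0 if and only if either M = A(s) := [[cosh s, 0, sinh s],[0, 1, 0],[sinh s, 0, cosh s]] for some s ∈ ℝ, or M = k_π·A(s) = [[−cosh s, 0, −sinh s],[0, −1, 0],[sinh s, 0, cosh s]] for some s ∈ ℝ, where k_π = diag(−1,−1,1); and in either case λ = ±1. -/

import Mathlib

open Matrix

noncomputable def eta (u : Fin 3 → ℝ) : ℝ := (u 2) ^ 2 - (u 0) ^ 2 - (u 1) ^ 2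

def inSO0 (M : Matrix (Fin 3) (Fin 3) ℝ) : Prop :=
  (∀ u : Fin 3 → ℝ, eta (M *ᵥ u) = eta u) ∧ M.det = 1 ∧ 0 < M 2 2

noncomputable def Amat (s : ℝ) : Matrix (Fin 3) (Fin 3) ℝ :=
  !![Real.cosh s, 0, Real.sinh s;
     0, 1, 0;
     Real.sinh s, 0, Real.cosh s]

/-- the projective stabilizer of u₋₁ = (0,1,0) in SO₀(2,1) is A ∪ k_π A,
and the eigenvalue λ is necessarily ±1. -/
theorem stmt10 (M : Matrix (Fin 3) (Fin 3) ℝ) (hM : inSO0 M) :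
    ((∃ l : ℝ, l ≠ 0 ∧ M *ᵥ ![(0 : ℝ), 1, 0] = l • ![(0 : ℝ), 1, 0]) ↔
      ((∃ s : ℝ, M = Amat s) ∨
        (∃ s : ℝ, M = !![-Real.cosh s, 0, -Real.sinh s;
                         0, -1, 0;
                         Real.sinh s, 0, Real.cosh s]))) ∧
    (∀ l : ℝ, l ≠ 0 → M *ᵥ ![(0 : ℝ), 1, 0] = l • ![(0 : ℝ), 1, 0] → l = 1 ∨ l = -1) := by
  obtain ⟨hη, hdet, hpos⟩ := hM
  have h0 := hη ![1,0,0]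
  have h1 := hη ![0,1,0]
  have h2 := hη ![0,0,1]
  have h01 := hη ![1,1,0]
  have h12 := hη ![0,1,1]
  have h02 := hη ![1,0,1]
  simp only [eta, mulVec, dotProduct, Fin.sum_univ_three, Matrix.cons_val_two, Matrix.tail_cons, Matrix.head_cons, Matrix.cons_val_zero, Matrix.cons_val_one] at h0 h1 h2 h01 h12 h02
  norm_num at h0 h1 h2 h01 h12 h02
  rw [Matrix.det_fin_three] at hdet
  have key : ∀ l : ℝ, M *ᵥ ![(0 : ℝ), 1, 0] = l • ![(0 : ℝ), 1, 0] ↔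
      (M 0 1 = 0 ∧ M 1 1 = l ∧ M 2 1 = 0) := by
    intro l
    constructor
    · intro h
      have e0 := congrFun h 0
      have e1 := congrFun h 1
      have e2 := congrFun h 2
      simp [mulVec, dotProduct, Fin.sum_univ_three] at e0 e1 e2
      exact ⟨e0, e1, e2⟩
    · rintro ⟨ha, hb, hc⟩
      funext i
      fin_cases i <;> simp [mulVec, dotProduct, Fin.sum_univ_three, ha, hb, hc]
  have part2 : ∀ l : ℝ, l ≠ 0 → M *ᵥ ![(0 : ℝ), 1, 0] = l • ![(0 : ℝ), 1, 0] →
      l = 1 ∨ l = -1 := by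
    intro l hl h
    obtain ⟨ha, hb, hc⟩ := (key l).1 h
    have h1' := h1
    rw [ha, hb, hc] at h1'
    have hl2 : l * l = 1 := by nlinarith [h1', sq_nonneg l]
    exact mul_self_eq_one_iff.mp hl2
  refine ⟨⟨?_, ?_⟩, part2⟩
  · rintro ⟨l, hl, h⟩
    have hlpm := part2 l hl h
    obtain ⟨ha, hb, hc⟩ := (key l).1 h
    rw [ha, hb, hc] at h1 h01 h12
    have hl2 : l ^ 2 = 1 := by linarith [h1, sq_abs l]
    have hql : M 1 0 * l = 0 := by linear_combination (h0 - h01 - hl2) / 2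
    have hrl : M 1 2 * l = 0 := by linear_combination (h2 - h12 - hl2) / 2
    have hq : M 1 0 = 0 := by
      rcases mul_eq_zero.mp hql with h' | h'
      · exact h'
      · exact absurd h' hl
    have hr : M 1 2 = 0 := by
      rcases mul_eq_zero.mp hrl with h' | h'
      · exact h'
      · exact absurd h' hl
    have hca : M 2 0 ^ 2 - M 0 0 ^ 2 = -1 := by linear_combination h0 + (M 1 0) * hq
    have hdb : M 2 2 ^ 2 - M 0 2 ^ 2 = 1 := by linear_combination h2 + (M 1 2) * hr
    have hcd : M 2 0 * M 2 2 - M 0 0 * M 0 2 = 0 := by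
      linear_combination (h02 - h0 - h2) / 2 + (M 1 2) * hq
    rw [ha, hc, hq, hr] at hdet
    rcases hlpm with rfl | rfl
    · left
      rw [hb] at hdet
      have had : M 0 0 * M 2 2 - M 0 2 * M 2 0 = 1 := by linear_combination hdet
      have hu : (M 0 0 - M 2 2) ^ 2 = 0 := by
        linear_combination (2 * (M 0 0 - M 2 2) * (M 0 2) + (M 2 0 * M 2 2 - M 0 0 * M 0 2)) * hcd
          - (M 2 2) ^ 2 * hca + (M 2 2) ^ 2 * hdb - 2 * (M 2 2) ^ 2 * had
          - (M 0 0 - M 2 2) ^ 2 * hdb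
      have hadeq : M 0 0 = M 2 2 := by
        have := (pow_eq_zero_iff two_ne_zero).mp hu
        linarith
      have hd0 : M 2 2 * (M 2 0 - M 0 2) = 0 := by
        linear_combination hcd + (M 0 2) * hadeq
      have hcbeq : M 2 0 = M 0 2 := by
        rcases mul_eq_zero.mp hd0 with h' | h'
        · exact absurd h' (ne_of_gt hpos)
        · linarith
      refine ⟨Real.arsinh (M 0 2), ?_⟩
      have hs : Real.sinh (Real.arsinh (M 0 2)) = M 0 2 := Real.sinh_arsinh _
      have hch : Real.cosh (Real.arsinh (M 0 2)) = M 2 2 := by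
        have hcs := Real.cosh_sq (Real.arsinh (M 0 2))
        rw [hs] at hcs
        have hC : 0 < Real.cosh (Real.arsinh (M 0 2)) := Real.cosh_pos _
        have hz : (Real.cosh (Real.arsinh (M 0 2)) - M 2 2) *
            (Real.cosh (Real.arsinh (M 0 2)) + M 2 2) = 0 := by
          linear_combination hcs - hdb
        rcases mul_eq_zero.mp hz with h' | h'
        · linarith
        · linarith
      have hch' : M 2 2 = Real.sqrt (1 + M 0 2 ^ 2) := by
        rw [← hch, Real.cosh_arsinh]; try norm_num [add_comm]
      ext i j
      fin_cases i <;> fin_cases j <;>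
        simp [Amat, hs, hch, hch', hadeq, hcbeq, ha, hb, hc, hq, hr]
    · right
      rw [hb] at hdet
      have had : M 0 0 * M 2 2 - M 0 2 * M 2 0 = -1 := by linear_combination -hdet
      have hu : (M 0 0 + M 2 2) ^ 2 = 0 := by
        linear_combination (2 * (M 0 0 + M 2 2) * (M 0 2) + (M 2 0 * M 2 2 - M 0 0 * M 0 2)) * hcd
          - (M 2 2) ^ 2 * hca + (M 2 2) ^ 2 * hdb + 2 * (M 2 2) ^ 2 * had
          - (M 0 0 + M 2 2) ^ 2 * hdb
      have hadeq : M 0 0 = -(M 2 2) := by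
        have := (pow_eq_zero_iff two_ne_zero).mp hu
        linarith
      have hd0 : M 2 2 * (M 2 0 + M 0 2) = 0 := by
        linear_combination hcd + (M 0 2) * hadeq
      have hcbeq : M 2 0 = -(M 0 2) := by
        rcases mul_eq_zero.mp hd0 with h' | h'
        · exact absurd h' (ne_of_gt hpos)
        · linarith
      refine ⟨Real.arsinh (-(M 0 2)), ?_⟩
      have hs : Real.sinh (Real.arsinh (-(M 0 2))) = -(M 0 2) := Real.sinh_arsinh _
      have hch : Real.cosh (Real.arsinh (-(M 0 2))) = M 2 2 := by
        have hcs := Real.cosh_sq (Real.arsinh (-(M 0 2)))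
        rw [hs] at hcs
        have hC : 0 < Real.cosh (Real.arsinh (-(M 0 2))) := Real.cosh_pos _
        have hz : (Real.cosh (Real.arsinh (-(M 0 2))) - M 2 2) *
            (Real.cosh (Real.arsinh (-(M 0 2))) + M 2 2) = 0 := by
          linear_combination hcs - hdb
        rcases mul_eq_zero.mp hz with h' | h'
        · linarith
        · linarith
      have hch' : M 2 2 = Real.sqrt (1 + M 0 2 ^ 2) := by
        rw [← hch, Real.cosh_arsinh]; try norm_num [add_comm]
      ext i j
      fin_cases i <;> fin_cases j <;>
        simp [hs, hch, hch', hadeq, hcbeq, ha, hb, hc, hq, hr]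
  · rintro (⟨s, rfl⟩ | ⟨s, rfl⟩)
    · exact ⟨1, one_ne_zero, (key 1).2 ⟨by simp [Amat], by simp [Amat], by simp [Amat]⟩⟩
    · exact ⟨-1, by norm_num, (key (-1)).2 ⟨by simp, by simp, by simp⟩⟩
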